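/- Let D be a DAG on V = {1,...,d} with reachability matrix R (R_{ji} = 1 iff j ∈ An(i)), and let χ be a symmetric d×d matrix with ones on the diagonal. For i ∈ V define recursively b̄_{ii} := 1 − ∑_{k∈an(i)} b̄_{kk} χ(k,i). Suppose: (a) sgn(χ) = sgn(RᵀR); (b) b̄_{ii} > 0 for all i; (c) χ(j,i) = χ(j,k)χ(k,i) for all i ∈ V, j ∈ an(i), k ∈ de(j) ∩ pa(i); (d) χ(i,j) = ∑_{k ∈ An(i)∩An(j)} b̄_{kk} · min(χ(k,i), χ(k,j)) for all i,j with i ∉ An(j), j ∉ An(i), An(i)∩An(j) ≠ ∅. Then the matrix B̄ defined by b̄_{ji} := b̄_{jj} χ(j,i) for j ∈ an(i), b̄_{ji} := 0 for j ∉ An(i), together with the diagonal entries b̄_{ii}, is a standardized max-linear coefficient matrix of a recursive max-weighted model on D whose tail dependence matrix is χ. -/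

import Mathlib

open Finset
open scoped Classical

/-- `anc E j i`: there is a directed path (length ≥ 1) from `j` to `i`, i.e. `j` is a
strict ancestor of `i` in the directed graph with edge relation `E`. -/
def anc {d : ℕ} (E : Fin d → Fin d → Prop) (j i : Fin d) : Prop :=
  Relation.TransGen E j i

/-- `Anc E j i`: `j` is an ancestor of `i`, including `j = i`. -/
def Anc {d : ℕ} (E : Fin d → Fin d → Prop) (j i : Fin d) : Prop :=
  j = i ∨ Relation.TransGen E j i

/-- The tail dependence coefficient associated to a (standardized) max-linear
coefficient matrix `B`: `χ(i,j) = ∑_{k ∈ An(i) ∩ An(j)} min (B k i) (B k j)`. -/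
noncomputable def tdc {d : ℕ} (E : Fin d → Fin d → Prop)
    (B : Matrix (Fin d) (Fin d) ℝ) (i j : Fin d) : ℝ :=
  ∑ k ∈ Finset.univ.filter (fun k => Anc E k i ∧ Anc E k j), min (B k i) (B k j)

theorem stmt13 {d : ℕ} (E : Fin d → Fin d → Prop)
    (hacyc : ∀ i, ¬ anc E i i)
    (chi : Fin d → Fin d → ℝ)
    (hsymm : ∀ i j, chi i j = chi j i)
    (hdiag : ∀ i, chi i i = 1)
    (bdiag : Fin d → ℝ)
    (hbdiag : ∀ i, bdiag i =
      1 - ∑ k ∈ Finset.univ.filter (fun k => anc E k i), bdiag k * chi k i)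
    (ha : ∀ i j, (0 < chi i j ↔ ∃ k, Anc E k i ∧ Anc E k j) ∧
      (chi i j = 0 ↔ ¬ ∃ k, Anc E k i ∧ Anc E k j))
    (hb : ∀ i, 0 < bdiag i)
    (hc : ∀ i j k, anc E j i → anc E j k → E k i → chi j i = chi j k * chi k i)
    (hd : ∀ i j, ¬ Anc E i j → ¬ Anc E j i → (∃ k, Anc E k i ∧ Anc E k j) →
      chi i j = ∑ k ∈ Finset.univ.filter (fun k => Anc E k i ∧ Anc E k j),
        bdiag k * min (chi k i) (chi k j)) :
    ∀ Bm : Matrix (Fin d) (Fin d) ℝ,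
      (∀ j i, Bm j i = if j = i then bdiag i
        else if anc E j i then bdiag j * chi j i else 0) →
      (∀ j i, 0 ≤ Bm j i) ∧
      (∀ j i, 0 < Bm j i ↔ Anc E j i) ∧
      (∀ i, ∑ k ∈ Finset.univ.filter (fun k => Anc E k i), Bm k i = 1) ∧
      (∀ i k j, anc E k i → anc E j k → Bm j i = Bm j k * Bm k i / Bm k k) ∧
      (∀ i j, chi i j = tdc E Bm i j) := by
  intro Bm hBm
  -- basic transitivity facts
  have hAncT : ∀ {a b c : Fin d}, Anc E a b → Anc E b c → Anc E a c := by
    rintro a b c (rfl | h1) (rfl | h2)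
    · exact Or.inl rfl
    · exact Or.inr h2
    · exact Or.inr h1
    · exact Or.inr (h1.trans h2)
  -- positivity of chi on ancestors
  have hchi_pos : ∀ j i, Anc E j i → 0 < chi j i := fun j i h =>
    (ha j i).1.mpr ⟨j, Or.inl rfl, h⟩
  -- anc implies ≠
  have hne : ∀ {j i : Fin d}, anc E j i → j ≠ i := by
    rintro j i h rfl; exact hacyc j h
  -- the Anc filter splits
  have hfilter : ∀ i : Fin d, Finset.univ.filter (fun k => Anc E k i)
      = insert i (Finset.univ.filter (fun k => anc E k i)) := by
    intro i; ext k
    rw [Finset.mem_filter, Finset.mem_insert, Finset.mem_filter]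
    exact ⟨fun h => Or.imp id (fun h => ⟨Finset.mem_univ k, h⟩) h.2,
      fun h => ⟨Finset.mem_univ k, Or.imp id (fun h => h.2) h⟩⟩
  -- sum identity
  have hsum1 : ∀ i : Fin d,
      ∑ k ∈ Finset.univ.filter (fun k => Anc E k i), bdiag k * chi k i = 1 := by
    intro i
    rw [hfilter i, Finset.sum_insert (by simp [hacyc i]), hdiag i]
    have := hbdiag i
    linarith
  -- multiplicativity of chi along paths
  have hL3 : ∀ j k i, anc E j k → anc E k i → chi j i = chi j k * chi k i := by
    intro j k i hjk hki
    induction hki with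
    | single h =>
        exact hc _ _ _ (hjk.trans (Relation.TransGen.single h)) hjk h
    | tail hkm hmi ih =>
        rename_i b c
        have hjb : anc E j b := hjk.trans hkm
        have h1 : chi j c = chi j b * chi b c :=
          hc _ _ _ (hjb.trans (Relation.TransGen.single hmi)) hjb hmi
        have h2 : chi k c = chi k b * chi b c :=
          hc _ _ _ (hkm.trans (Relation.TransGen.single hmi)) hkm hmi
        rw [h1, ih, h2]; ring
  -- chi < 1 on strict ancestors
  have hL4 : ∀ i j, anc E i j → chi i j < 1 := by
    intro i j hij
    have hrw : ∑ k ∈ Finset.univ.filter (fun k => Anc E k i), bdiag k * chi k j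
        = chi i j := by
      have : ∀ k ∈ Finset.univ.filter (fun k => Anc E k i),
          bdiag k * chi k j = (bdiag k * chi k i) * chi i j := by
        intro k hk
        rcases (Finset.mem_filter.1 hk).2 with rfl | hki
        · rw [hdiag]; ring
        · rw [hL3 k i j hki hij]; ring
      rw [Finset.sum_congr rfl this, ← Finset.sum_mul, hsum1 i, one_mul]
    have hsub : Finset.univ.filter (fun k => Anc E k i)
        ⊆ Finset.univ.filter (fun k => anc E k j) := by
      intro k hk
      simp only [Finset.mem_filter, Finset.mem_univ, true_and] at hk ⊢
      rcases hk with rfl | hki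
      · exact hij
      · exact hki.trans hij
    have hle : chi i j ≤ ∑ k ∈ Finset.univ.filter (fun k => anc E k j),
        bdiag k * chi k j := by
      rw [← hrw]
      refine Finset.sum_le_sum_of_subset_of_nonneg hsub ?_
      intro k hk _
      exact le_of_lt (mul_pos (hb k) (hchi_pos k j (Or.inr (Finset.mem_filter.1 hk).2)))
    have := hbdiag j
    have := hb j
    linarith
  -- Bm on ancestors
  have hBm_eq : ∀ k i, Anc E k i → Bm k i = bdiag k * chi k i := by
    intro k i hk
    rcases hk with rfl | hki
    · rw [hBm]; simp [hdiag]
    · have hki' : anc E k i := hki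
      rw [hBm, if_neg (hne hki'), if_pos hki']
  have hBdiagBm : ∀ k : Fin d, Bm k k = bdiag k := by
    intro k; rw [hBm]; simp
  -- nonnegativity
  have hBnonneg : ∀ j i, 0 ≤ Bm j i := by
    intro j i
    rw [hBm]
    split_ifs with h1 h2
    · exact le_of_lt (hb i)
    · exact le_of_lt (mul_pos (hb j) (hchi_pos j i (Or.inr h2)))
    · exact le_refl 0
  -- positivity iff ancestry
  have hBpos : ∀ j i, 0 < Bm j i ↔ Anc E j i := by
    intro j i
    constructor
    · intro h
      by_contra hn
      rw [hBm, if_neg (fun e => hn (Or.inl e)),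
        if_neg (fun e : anc E j i => hn (Or.inr e))] at h
      exact lt_irrefl 0 h
    · intro h
      rw [hBm_eq j i h]
      exact mul_pos (hb j) (hchi_pos j i h)
  -- column sums
  have hcol : ∀ i, ∑ k ∈ Finset.univ.filter (fun k => Anc E k i), Bm k i = 1 := by
    intro i
    rw [Finset.sum_congr rfl (fun k hk => hBm_eq k i (Finset.mem_filter.1 hk).2)]
    exact hsum1 i
  -- the tdc identity in the comparable case
  have htdc_anc : ∀ i j, Anc E i j → chi i j = tdc E Bm i j := by
    intro i j hij
    have hset : Finset.univ.filter (fun k => Anc E k i ∧ Anc E k j)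
        = Finset.univ.filter (fun k => Anc E k i) := by
      ext k
      simp only [Finset.mem_filter, Finset.mem_univ, true_and]
      exact ⟨fun h => h.1, fun h => ⟨h, hAncT h hij⟩⟩
    have hle1 : chi i j ≤ 1 := by
      rcases hij with rfl | h
      · rw [hdiag]
      · exact le_of_lt (hL4 i j h)
    have hterm : ∀ k ∈ Finset.univ.filter (fun k => Anc E k i),
        min (Bm k i) (Bm k j) = Bm k i * chi i j := by
      intro k hk
      have hki := (Finset.mem_filter.1 hk).2
      have hBkj : Bm k j = Bm k i * chi i j := by
        rcases hij with rfl | hij'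
        · rw [hdiag]; ring
        · rw [hBm_eq k j (hAncT hki (Or.inr hij')), hBm_eq k i hki]
          rcases hki with rfl | hki'
          · rw [hdiag]; ring
          · rw [hL3 k i j hki' hij']; ring
      rw [hBkj]
      exact min_eq_right (mul_le_of_le_one_right (hBnonneg k i) hle1)
    unfold tdc
    rw [hset, Finset.sum_congr rfl hterm, ← Finset.sum_mul, hcol i, one_mul]
  -- tdc is symmetric
  have htdc_symm : ∀ i j, tdc E Bm i j = tdc E Bm j i := by
    intro i j
    unfold tdc
    rw [show Finset.univ.filter (fun k => Anc E k i ∧ Anc E k j)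
        = Finset.univ.filter (fun k => Anc E k j ∧ Anc E k i) by
          ext k; simp [and_comm]]
    exact Finset.sum_congr rfl fun k _ => min_comm _ _
  refine ⟨hBnonneg, hBpos, hcol, ?_, ?_⟩
  · -- max-weighted property
    intro i k j hki hjk
    have hbk : bdiag k ≠ 0 := ne_of_gt (hb k)
    rw [hBm_eq j i (Or.inr (hjk.trans hki)), hBm_eq j k (Or.inr hjk),
      hBm_eq k i (Or.inr hki), hBdiagBm k, hL3 j k i hjk hki]
    field_simp
  · -- the tail dependence matrix is chi
    intro i j
    by_cases h1 : Anc E i j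
    · exact htdc_anc i j h1
    by_cases h2 : Anc E j i
    · rw [hsymm i j, htdc_anc j i h2, htdc_symm i j]
    by_cases h3 : ∃ k, Anc E k i ∧ Anc E k j
    · rw [hd i j h1 h2 h3]
      unfold tdc
      refine Finset.sum_congr rfl ?_
      intro k hk
      obtain ⟨hki, hkj⟩ := (Finset.mem_filter.1 hk).2
      have hki' : anc E k i := by
        rcases hki with rfl | h
        · exact absurd hkj h1
        · exact h
      have hkj' : anc E k j := by
        rcases hkj with rfl | h
        · exact absurd hki h2
        · exact h
      rw [hBm_eq k i (Or.inr hki'), hBm_eq k j (Or.inr hkj')]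
      rcases le_total (chi k i) (chi k j) with h | h
      · rw [min_eq_left h, min_eq_left (mul_le_mul_of_nonneg_left h (le_of_lt (hb k)))]
      · rw [min_eq_right h, min_eq_right (mul_le_mul_of_nonneg_left h (le_of_lt (hb k)))]
    · rw [(ha i j).2.mpr h3]
      unfold tdc
      rw [Finset.filter_false_of_mem, Finset.sum_empty]
      intro k _
      exact fun hc => h3 ⟨k, hc⟩
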